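/- Let H : ℝ → ℝ be continuous and coercive and F0 : ℝ → ℝ be continuous, non-increasing and semi-coercive. If p ∈ χ⁻(ℜF0), then ℜF0 is constant equal to H(p) on the interval [p⁻, p]; if p ∈ χ⁺(ℜF0), then ℜF0 is constant equal to H(p) on [p, p⁺] ∩ ℝ. -/
import Mathlib


open Set Filter

attribute [local instance] Classical.propDecidable

noncomputable section

/-- `H` is coercive: `H p → +∞` as `|p| → +∞`. -/
def Coercive (H : ℝ → ℝ) : Prop := Tendsto H (cocompact ℝ) atTop

/-- `F` is semi-coercive: `F p → +∞` as `p → -∞`. -/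
def SemiCoercive (F : ℝ → ℝ) : Prop := Tendsto F atBot atTop

/-- Sub-relaxation: `(R̲F)(p) = sup_{q ≥ p} min (F q) (H q)`. -/
def subR (H F : ℝ → ℝ) (p : ℝ) : ℝ := sSup ((fun q => min (F q) (H q)) '' Ici p)

/-- Super-relaxation: `(R̄F)(p) = inf_{q ≤ p} max (F q) (H q)`. -/
def supR (H F : ℝ → ℝ) (p : ℝ) : ℝ := sInf ((fun q => max (F q) (H q)) '' Iic p)

/-- Relaxation operator: `R̲F` where `F ≥ H`, `R̄F` where `F ≤ H`. -/
def relax (H F : ℝ → ℝ) (p : ℝ) : ℝ := if H p ≤ F p then subR H F p else supR H F p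

/-- `p` is a negative characteristic point of `F` relative to `H`. -/
def negChar (H F : ℝ → ℝ) (p : ℝ) : Prop :=
  H p = F p ∧ ∃ ε > 0, ∀ q ∈ Ioo (p - ε) p, H q < H p

/-- `p` is a positive characteristic point of `F` relative to `H`. -/
def posChar (H F : ℝ → ℝ) (p : ℝ) : Prop :=
  H p = F p ∧ ∃ ε > 0, ∀ q ∈ Ioo p (p + ε), H p < H q

/-- The upper point `p⁺ ∈ ℝ ∪ {+∞}` associated with `p` and `H`. -/
def upperPt (H : ℝ → ℝ) (p : ℝ) : EReal :=
  if ∀ ε > 0, ∃ q, p < q ∧ q < p + ε ∧ H q ≤ H p then (p : EReal)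
  else sSup ((fun q : ℝ => (q : EReal)) '' {q : ℝ | p < q ∧ ∀ r ∈ Ioo p q, H p < H r})

/-- The lower point `p⁻` associated with `p` and `H`. -/
def lowerPt (H : ℝ → ℝ) (p : ℝ) : ℝ :=
  if ∀ ε > 0, ∃ q, p - ε < q ∧ q < p ∧ H p ≤ H q then p
  else sInf {q : ℝ | q < p ∧ ∀ r ∈ Ioo q p, H r < H p}

/-- `p` is a positive limiter point of `F`. -/
def posLimiter (H F : ℝ → ℝ) (p : ℝ) : Prop :=
  (p : EReal) < upperPt H p ∧ F p ≤ H p ∧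
    ∀ q : ℝ, H q < H p → F q ≤ H q →
      {r : ℝ | lowerPt H q < r ∧ (r : EReal) < upperPt H q} ∩
        {r : ℝ | p < r ∧ (r : EReal) < upperPt H p} = ∅

/-- `p` is a negative limiter point of `F`. -/
def negLimiter (H F : ℝ → ℝ) (p : ℝ) : Prop :=
  lowerPt H p < p ∧ H p ≤ F p ∧
    ∀ q : ℝ, H q ≤ F q → H p < H q →
      {r : ℝ | lowerPt H q < r ∧ (r : EReal) < upperPt H q} ∩ Ioo (lowerPt H p) p = ∅

/-- The Godunov flux associated with `H`. -/
def godunov (H : ℝ → ℝ) (q p : ℝ) : ℝ :=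
  if p ≤ q then sSup (H '' Icc p q) else sInf (H '' Icc q p)

/-- The lower (set-valued) Godunov semi-flux `G̲(q,p)`, as a subset of the extended reals. -/
def subG (H : ℝ → ℝ) (q p : ℝ) : Set EReal :=
  if q < p then {⊥}
  else if q = p then Iic ((H p : ℝ) : EReal)
  else {((godunov H q p : ℝ) : EReal)}

/-- The upper (set-valued) Godunov semi-flux `Ḡ(q,p)`, as a subset of the extended reals. -/
def supG (H : ℝ → ℝ) (q p : ℝ) : Set EReal :=
  if q < p then {((godunov H q p : ℝ) : EReal)}
  else if q = p then Ici ((H p : ℝ) : EReal)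
  else {⊤}


open Topology

section Aux

variable {H F0 : ℝ → ℝ}

/-- A continuous coercive function is bounded below. -/
lemma exists_lb (hH : Continuous H) (hHc : Coercive H) : ∃ m : ℝ, ∀ x, m ≤ H x := by
  have h0 : {x : ℝ | 0 ≤ H x} ∈ cocompact ℝ := hHc.eventually (eventually_ge_atTop 0)
  obtain ⟨K, hK, hKc⟩ := mem_cocompact.mp h0
  obtain ⟨m, hm⟩ := (hK.image_of_continuousOn hH.continuousOn).bddBelow
  refine ⟨min m 0, fun x => ?_⟩
  by_cases hx : x ∈ K
  · exact le_trans (min_le_left _ _) (hm ⟨x, hx, rfl⟩)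
  · exact le_trans (min_le_right _ _) (hKc hx)

lemma ub_min_image (hFa : Antitone F0) (r : ℝ) :
    F0 r ∈ upperBounds ((fun s => min (F0 s) (H s)) '' Ici r) := by
  rintro x ⟨s, hs, rfl⟩
  exact le_trans (min_le_left _ _) (hFa hs)

lemma lb_max_image {m : ℝ} (hm : ∀ x, m ≤ H x) (r : ℝ) :
    m ∈ lowerBounds ((fun s => max (F0 s) (H s)) '' Iic r) := by
  rintro x ⟨s, _, rfl⟩
  exact le_trans (hm s) (le_max_right _ _)

lemma lower_struct (hH : Continuous H) {p ε : ℝ} (hε : 0 < ε)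
    (hlt : ∀ q ∈ Ioo (p - ε) p, H q < H p) :
    ∀ x ∈ Icc (lowerPt H p) p, H x ≤ H p := by
  have hif : ¬ ∀ ε > 0, ∃ q, p - ε < q ∧ q < p ∧ H p ≤ H q := by
    intro h
    obtain ⟨q, h1, h2, h3⟩ := h ε hε
    exact absurd (hlt q ⟨h1, h2⟩) (not_lt.mpr h3)
  rw [lowerPt, if_neg hif]
  set S := {q : ℝ | q < p ∧ ∀ r ∈ Ioo q p, H r < H p} with hSdef
  have hne : S.Nonempty := by
    refine ⟨p - ε / 2, by linarith, fun r hr => hlt r ⟨by linarith [hr.1], hr.2⟩⟩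
  intro x hx
  rcases eq_or_lt_of_le hx.2 with h | hxp
  · exact le_of_eq (by rw [h])
  · have key : ∀ y ∈ Ioo x p, H y < H p := by
      intro y hy
      obtain ⟨s, hsS, hsy⟩ := exists_lt_of_csInf_lt hne (lt_of_le_of_lt hx.1 hy.1)
      exact hsS.2 y ⟨hsy, hy.2⟩
    have ht : Tendsto H (𝓝[>] x) (𝓝 (H x)) :=
      hH.continuousAt.tendsto.mono_left nhdsWithin_le_nhds
    refine le_of_tendsto ht ?_
    filter_upwards [Ioo_mem_nhdsGT_of_mem (⟨le_refl x, hxp⟩ : x ∈ Ico x p)] with y hy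
    exact (key y hy).le

lemma upper_struct (hH : Continuous H) {p ε : ℝ} (hε : 0 < ε)
    (hlt : ∀ q ∈ Ioo p (p + ε), H p < H q)
    {q : ℝ} (hpq : p ≤ q) (hq : (q : EReal) ≤ upperPt H p) :
    ∀ x ∈ Icc p q, H p ≤ H x := by
  have hif : ¬ ∀ ε > 0, ∃ r, p < r ∧ r < p + ε ∧ H r ≤ H p := by
    intro h
    obtain ⟨r, h1, h2, h3⟩ := h ε hε
    exact absurd (hlt r ⟨h1, h2⟩) (not_lt.mpr h3)
  rw [upperPt, if_neg hif] at hq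
  intro x hx
  rcases eq_or_lt_of_le hx.1 with h | hpx
  · exact le_of_eq (by rw [← h])
  · have key : ∀ y ∈ Ioo p x, H p < H y := by
      intro y hy
      have hyq : (y : EReal) <
          sSup ((fun q : ℝ => (q : EReal)) '' {q : ℝ | p < q ∧ ∀ r ∈ Ioo p q, H p < H r}) :=
        lt_of_lt_of_le (EReal.coe_lt_coe_iff.mpr (lt_of_lt_of_le hy.2 hx.2)) hq
      obtain ⟨a, ⟨t, ht, rfl⟩, hya⟩ := lt_sSup_iff.mp hyq
      exact ht.2 y ⟨hy.1, EReal.coe_lt_coe_iff.mp hya⟩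
    have ht : Tendsto H (𝓝[<] x) (𝓝 (H x)) :=
      hH.continuousAt.tendsto.mono_left nhdsWithin_le_nhds
    refine ge_of_tendsto ht ?_
    filter_upwards [Ioo_mem_nhdsLT_of_mem (⟨hpx, le_refl x⟩ : x ∈ Ioc p x)] with y hy
    exact (key y hy).le

end Aux

/-- `ℜF0` is constant on `[p⁻,p]` (resp. `[p,p⁺] ∩ ℝ`) at negative (resp. positive)
characteristic points of `ℜF0`. -/
theorem relax_constant_near_characteristic_points (H F0 : ℝ → ℝ)
    (hH : Continuous H) (hHc : Coercive H)
    (hF : Continuous F0) (hFa : Antitone F0) (hFs : SemiCoercive F0) (p : ℝ) :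
    (negChar H (relax H F0) p → ∀ q ∈ Icc (lowerPt H p) p, relax H F0 q = H p) ∧
    (posChar H (relax H F0) p →
      ∀ q : ℝ, p ≤ q → (q : EReal) ≤ upperPt H p → relax H F0 q = H p) := by
  obtain ⟨m, hm⟩ := exists_lb hH hHc
  constructor
  · rintro ⟨hHp, ε, hε, hlt⟩ r hr
    have hstruct := lower_struct hH hε hlt
    -- Step 1: H p ≤ F0 p
    have hA : H p ≤ F0 p := by
      by_contra hcon
      have hrel : relax H F0 p = supR H F0 p := by unfold relax; rw [if_neg hcon]
      have hsup : sInf ((fun s => max (F0 s) (H s)) '' Iic p) = H p := by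
        rw [← supR, ← hrel, ← hHp]
      have hkey : ∀ s ≤ p, H p ≤ max (F0 s) (H s) := by
        intro s hs
        calc H p = _ := hsup.symm
          _ ≤ _ := csInf_le ⟨m, lb_max_image hm p⟩ ⟨s, hs, rfl⟩
      have hev : ∀ᶠ s in 𝓝[<] p, H p ≤ F0 s := by
        filter_upwards [Ioo_mem_nhdsLT_of_mem
          (⟨by linarith, le_refl p⟩ : p ∈ Ioc (p - ε) p)] with s hs
        have h1 := hkey s hs.2.le
        have h2 := hlt s hs
        rcases max_cases (F0 s) (H s) with ⟨hmax, _⟩ | ⟨hmax, _⟩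
        · rwa [hmax] at h1
        · rw [hmax] at h1; linarith
      have : H p ≤ F0 p :=
        ge_of_tendsto (hF.continuousAt.tendsto.mono_left nhdsWithin_le_nhds) hev
      exact hcon this
    have hrelp : sSup ((fun s => min (F0 s) (H s)) '' Ici p) = H p := by
      have h1 : relax H F0 p = subR H F0 p := by unfold relax; rw [if_pos hA]
      rw [← subR, ← h1, ← hHp]
    have hkey : ∀ s, p ≤ s → min (F0 s) (H s) ≤ H p := by
      intro s hs
      calc min (F0 s) (H s) ≤ _ := le_csSup ⟨F0 p, ub_min_image hFa p⟩ ⟨s, hs, rfl⟩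
        _ = H p := hrelp
    -- main argument for r
    have hHr : H r ≤ H p := hstruct r hr
    have hbr : H r ≤ F0 r := hHr.trans (hA.trans (hFa hr.2))
    have hrel : relax H F0 r = subR H F0 r := by unfold relax; rw [if_pos hbr]
    rw [hrel, subR]
    apply le_antisymm
    · refine csSup_le (⟨_, ⟨r, le_refl r, rfl⟩⟩ : ((fun s => min (F0 s) (H s)) '' Ici r).Nonempty) ?_
      rintro x ⟨s, hs, rfl⟩
      by_cases hsp : p ≤ s
      · exact hkey s hsp
      · exact le_trans (min_le_right _ _) (hstruct s ⟨le_trans hr.1 hs, (not_le.mp hsp).le⟩)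
    · calc H p = min (F0 p) (H p) := (min_eq_right hA).symm
        _ ≤ _ := le_csSup ⟨F0 r, ub_min_image hFa r⟩ ⟨p, hr.2, rfl⟩
  · rintro ⟨hHp, ε, hε, hlt⟩ q hpq hq
    have hstruct := upper_struct hH hε hlt hpq hq
    by_cases hA : H p ≤ F0 p
    · -- relax p = subR p = H p; derive F0 p = H p
      have hrelp : sSup ((fun s => min (F0 s) (H s)) '' Ici p) = H p := by
        have h1 : relax H F0 p = subR H F0 p := by unfold relax; rw [if_pos hA]
        rw [← subR, ← h1, ← hHp]
      have hkey : ∀ s, p ≤ s → min (F0 s) (H s) ≤ H p := by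
        intro s hs
        calc min (F0 s) (H s) ≤ _ := le_csSup ⟨F0 p, ub_min_image hFa p⟩ ⟨s, hs, rfl⟩
          _ = H p := hrelp
      have hF0p : F0 p ≤ H p := by
        have hev : ∀ᶠ s in 𝓝[>] p, F0 s ≤ H p := by
          filter_upwards [Ioo_mem_nhdsGT_of_mem
            (⟨le_refl p, by linarith⟩ : p ∈ Ico p (p + ε))] with s hs
          have h1 := hkey s hs.1.le
          have h2 := hlt s hs
          rcases min_cases (F0 s) (H s) with ⟨hmin, _⟩ | ⟨hmin, _⟩
          · rwa [hmin] at h1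
          · rw [hmin] at h1; linarith
        exact le_of_tendsto (hF.continuousAt.tendsto.mono_left nhdsWithin_le_nhds) hev
      have hEq : F0 p = H p := le_antisymm hF0p hA
      by_cases hbq : H q ≤ F0 q
      · have h1 : F0 q ≤ H p := (hFa hpq).trans hEq.le
        have h2 : H p ≤ H q := hstruct q ⟨hpq, le_refl q⟩
        have hHq : H q = H p := le_antisymm (hbq.trans h1) h2
        have hrel : relax H F0 q = subR H F0 q := by unfold relax; rw [if_pos hbq]
        rw [hrel, subR]
        apply le_antisymm
        · refine csSup_le (⟨_, ⟨q, le_refl q, rfl⟩⟩ : ((fun s => min (F0 s) (H s)) '' Ici q).Nonempty) ?_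
          rintro x ⟨s, hs, rfl⟩
          exact le_trans (min_le_left _ _) (le_trans (hFa (hpq.trans hs)) hEq.le)
        · calc H p = min (F0 q) (H q) := ((min_eq_right hbq).trans hHq).symm
            _ ≤ _ := le_csSup ⟨F0 q, ub_min_image hFa q⟩ ⟨q, le_refl q, rfl⟩
      · have hrel : relax H F0 q = supR H F0 q := by unfold relax; rw [if_neg hbq]
        rw [hrel, supR]
        apply le_antisymm
        · calc sInf ((fun s => max (F0 s) (H s)) '' Iic q)
              ≤ max (F0 p) (H p) := csInf_le ⟨m, lb_max_image hm q⟩ ⟨p, hpq, rfl⟩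
            _ = H p := by rw [hEq, max_self]
        · refine le_csInf (⟨_, ⟨q, le_refl q, rfl⟩⟩ : ((fun s => max (F0 s) (H s)) '' Iic q).Nonempty) ?_
          rintro x ⟨s, hs, rfl⟩
          by_cases hsp : p ≤ s
          · exact le_trans (hstruct s ⟨hsp, hs⟩) (le_max_right _ _)
          · calc H p = F0 p := hEq.symm
              _ ≤ F0 s := hFa (not_le.mp hsp).le
              _ ≤ _ := le_max_left _ _
    · -- relax p = supR p = H p
      have hrelp : sInf ((fun s => max (F0 s) (H s)) '' Iic p) = H p := by
        have h1 : relax H F0 p = supR H F0 p := by unfold relax; rw [if_neg hA]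
        rw [← supR, ← h1, ← hHp]
      have hkey : ∀ s, s ≤ p → H p ≤ max (F0 s) (H s) := by
        intro s hs
        calc H p = _ := hrelp.symm
          _ ≤ _ := csInf_le ⟨m, lb_max_image hm p⟩ ⟨s, hs, rfl⟩
      have hbq : ¬ H q ≤ F0 q := by
        have h1 : F0 q ≤ F0 p := hFa hpq
        have h2 : H p ≤ H q := hstruct q ⟨hpq, le_refl q⟩
        push_neg at hA ⊢
        linarith
      have hrel : relax H F0 q = supR H F0 q := by unfold relax; rw [if_neg hbq]
      rw [hrel, supR]
      apply le_antisymm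
      · calc sInf ((fun s => max (F0 s) (H s)) '' Iic q)
            ≤ max (F0 p) (H p) := csInf_le ⟨m, lb_max_image hm q⟩ ⟨p, hpq, rfl⟩
          _ = H p := max_eq_right (not_le.mp hA).le
      · refine le_csInf (⟨_, ⟨q, le_refl q, rfl⟩⟩ : ((fun s => max (F0 s) (H s)) '' Iic q).Nonempty) ?_
        rintro x ⟨s, hs, rfl⟩
        by_cases hsp : p ≤ s
        · exact le_trans (hstruct s ⟨hsp, hs⟩) (le_max_right _ _)
        · exact hkey s (not_le.mp hsp).le
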